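/- For the discounted value function V_λ(x₀) = sup_{t≥0} ( ∫₀ᵗ λ e^{-λs} h(x_s) ds + e^{-λt} h(x_t) ) along a trajectory s ↦ x_s, the dynamic programming identity holds: V_λ(x₀) = max( sup_{0 ≤ r ≤ t} ( ∫₀ʳ λ e^{-λs} h(x_s) ds + e^{-λr} h(x_r) ), ∫₀ᵗ λ e^{-λs} h(x_s) ds + e^{-λt} V_λ(x_t) ) for every t ≥ 0, where the value at x_t is computed along the shifted trajectory. -/

import Mathlib

open Real MeasureTheory intervalIntegral

section DPAux

variable {X : Type*} [TopologicalSpace X]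

private lemma dp_exp_integral (lam Δ : ℝ) :
    ∫ s in (0:ℝ)..Δ, lam * Real.exp (-lam * s) = 1 - Real.exp (-lam * Δ) := by
  have key : ∀ s : ℝ, HasDerivAt (fun u => -Real.exp (-lam * u))
      (lam * Real.exp (-lam * s)) s := by
    intro s
    have h1 : HasDerivAt (fun u : ℝ => -lam * u) (-lam) s := by
      simpa using (hasDerivAt_id s).const_mul (-lam)
    have h2 := h1.exp.neg
    exact h2.congr_deriv (by ring)
  have hcont : Continuous fun s : ℝ => lam * Real.exp (-lam * s) := by continuity
  rw [intervalIntegral.integral_eq_sub_of_hasDerivAt (fun s _ => key s)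
      (hcont.intervalIntegrable _ _)]
  simp
  ring

private lemma dp_pointwise_bound (y : ℝ → X) (hy : Continuous y)
    (h : X → ℝ) (hh : Continuous h) (C : ℝ) (hC : ∀ z, |h z| ≤ C)
    (lam : ℝ) (hlam : 0 ≤ lam) (Δ : ℝ) (hΔ : 0 ≤ Δ) :
    (∫ s in (0:ℝ)..Δ, lam * Real.exp (-lam * s) * h (y s)) +
      Real.exp (-lam * Δ) * h (y Δ) ≤ C + C := by
  have hC0 : 0 ≤ C := le_trans (abs_nonneg _) (hC (y 0))
  have hexp1 : Real.exp (-lam * Δ) ≤ 1 := by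
    apply Real.exp_le_one_iff.mpr
    nlinarith
  have hint1 : IntervalIntegrable (fun s => lam * Real.exp (-lam * s) * h (y s))
      volume 0 Δ := by
    apply Continuous.intervalIntegrable
    continuity
  have hint2 : IntervalIntegrable (fun s => lam * Real.exp (-lam * s) * C)
      volume 0 Δ := by
    apply Continuous.intervalIntegrable
    continuity
  have h1 : (∫ s in (0:ℝ)..Δ, lam * Real.exp (-lam * s) * h (y s)) ≤
      ∫ s in (0:ℝ)..Δ, lam * Real.exp (-lam * s) * C := by
    apply intervalIntegral.integral_mono_on hΔ hint1 hint2
    intro s _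
    have hle : h (y s) ≤ C := le_trans (le_abs_self _) (hC (y s))
    have hpos : 0 ≤ lam * Real.exp (-lam * s) := by positivity
    exact mul_le_mul_of_nonneg_left hle hpos
  have h2 : (∫ s in (0:ℝ)..Δ, lam * Real.exp (-lam * s) * C) ≤ C := by
    have he : (∫ s in (0:ℝ)..Δ, lam * Real.exp (-lam * s) * C)
        = (1 - Real.exp (-lam * Δ)) * C := by
      rw [intervalIntegral.integral_mul_const, dp_exp_integral]
    rw [he]
    nlinarith [Real.exp_pos (-lam * Δ)]
  have h3 : Real.exp (-lam * Δ) * h (y Δ) ≤ C := by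
    calc Real.exp (-lam * Δ) * h (y Δ)
        ≤ Real.exp (-lam * Δ) * |h (y Δ)| :=
          mul_le_mul_of_nonneg_left (le_abs_self _) (Real.exp_pos _).le
      _ ≤ 1 * C := mul_le_mul hexp1 (hC _) (abs_nonneg _) zero_le_one
      _ = C := one_mul C
  linarith

private lemma dp_split (x : ℝ → X) (hx : Continuous x)
    (h : X → ℝ) (hh : Continuous h)
    (lam : ℝ) (t u : ℝ) :
    (∫ s in (0:ℝ)..(t + u), lam * Real.exp (-lam * s) * h (x s)) +
      Real.exp (-lam * (t + u)) * h (x (t + u))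
    = (∫ s in (0:ℝ)..t, lam * Real.exp (-lam * s) * h (x s)) +
      Real.exp (-lam * t) *
        ((∫ s in (0:ℝ)..u, lam * Real.exp (-lam * s) * h (x (t + s))) +
          Real.exp (-lam * u) * h (x (t + u))) := by
  have hcont : Continuous fun s : ℝ => lam * Real.exp (-lam * s) * h (x s) := by
    continuity
  have hsplit : (∫ s in (0:ℝ)..t, lam * Real.exp (-lam * s) * h (x s)) +
      (∫ s in t..(t + u), lam * Real.exp (-lam * s) * h (x s)) =
      ∫ s in (0:ℝ)..(t + u), lam * Real.exp (-lam * s) * h (x s) :=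
    intervalIntegral.integral_add_adjacent_intervals
      (hcont.intervalIntegrable _ _) (hcont.intervalIntegrable _ _)
  have hshift : (∫ s in t..(t + u), lam * Real.exp (-lam * s) * h (x s)) =
      Real.exp (-lam * t) *
        ∫ s in (0:ℝ)..u, lam * Real.exp (-lam * s) * h (x (t + s)) := by
    have e1 : (∫ s in (0:ℝ)..u, lam * Real.exp (-lam * (t + s)) * h (x (t + s))) =
        ∫ s in t..(t + u), lam * Real.exp (-lam * s) * h (x s) := by
      simpa using intervalIntegral.integral_comp_add_left (a := 0) (b := u)
        (f := fun s => lam * Real.exp (-lam * s) * h (x s)) t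
    rw [← e1, ← intervalIntegral.integral_const_mul]
    apply intervalIntegral.integral_congr
    intro s _
    simp only
    rw [show -lam * (t + s) = -lam * t + -lam * s by ring, Real.exp_add]
    ring
  have hexp : Real.exp (-lam * (t + u)) = Real.exp (-lam * t) * Real.exp (-lam * u) := by
    rw [← Real.exp_add]
    ring_nf
  rw [← hsplit, hshift, hexp]
  ring

end DPAux

/-- Dynamic programming identity for the discounted value function
`V_λ(x_t) = sup_{Δ ≥ 0} ( ∫₀^Δ λ e^{-λs} h(x_{t+s}) ds + e^{-λΔ} h(x_{t+Δ}) )`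
along a trajectory `x`: for every `t ≥ 0`,
`V 0 = max ( sup_{0 ≤ r ≤ t} ( ∫₀ʳ λ e^{-λs} h(x_s) ds + e^{-λr} h(x_r) ),
             ∫₀ᵗ λ e^{-λs} h(x_s) ds + e^{-λt} V t )`. -/
theorem discounted_dynamic_programming
    {X : Type*} [TopologicalSpace X]
    (x : ℝ → X) (hx : Continuous x)
    (h : X → ℝ) (hh : Continuous h) (hb : ∃ C, ∀ y, |h y| ≤ C)
    (lam : ℝ) (hlam : 0 ≤ lam)
    (V : ℝ → ℝ)
    (hV : ∀ t : ℝ, V t =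
      ⨆ Δ : {Δ : ℝ // 0 ≤ Δ},
        ((∫ s in (0:ℝ)..(Δ : ℝ), lam * Real.exp (-lam * s) * h (x (t + s))) +
          Real.exp (-lam * (Δ : ℝ)) * h (x (t + (Δ : ℝ))))) :
    ∀ t : ℝ, 0 ≤ t →
      V 0 = max
        (⨆ r : {r : ℝ // 0 ≤ r ∧ r ≤ t},
          ((∫ s in (0:ℝ)..(r : ℝ), lam * Real.exp (-lam * s) * h (x s)) +
            Real.exp (-lam * (r : ℝ)) * h (x (r : ℝ))))
        ((∫ s in (0:ℝ)..t, lam * Real.exp (-lam * s) * h (x s)) +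
          Real.exp (-lam * t) * V t) := by
  intro t ht
  obtain ⟨C, hC⟩ := hb
  -- notation
  set F : ℝ → ℝ := fun Δ =>
    (∫ s in (0:ℝ)..Δ, lam * Real.exp (-lam * s) * h (x s)) +
      Real.exp (-lam * Δ) * h (x Δ) with hF
  set G : ℝ → ℝ := fun u =>
    (∫ s in (0:ℝ)..u, lam * Real.exp (-lam * s) * h (x (t + s))) +
      Real.exp (-lam * u) * h (x (t + u)) with hG
  have hFb : ∀ Δ : ℝ, 0 ≤ Δ → F Δ ≤ C + C := fun Δ hΔ =>
    dp_pointwise_bound x hx h hh C hC lam hlam Δ hΔ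
  have hGb : ∀ u : ℝ, 0 ≤ u → G u ≤ C + C := fun u hu =>
    dp_pointwise_bound (fun s => x (t + s)) (by continuity) h hh C hC lam hlam u hu
  have hV0 : V 0 = ⨆ Δ : {Δ : ℝ // 0 ≤ Δ}, F (Δ : ℝ) := by
    rw [hV 0]
    congr 1
    funext Δ
    simp [hF]
  have hVt : V t = ⨆ u : {u : ℝ // 0 ≤ u}, G (u : ℝ) := hV t
  have hbddF : BddAbove (Set.range fun Δ : {Δ : ℝ // 0 ≤ Δ} => F (Δ : ℝ)) := by
    refine ⟨C + C, ?_⟩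
    rintro _ ⟨⟨Δ, hΔ⟩, rfl⟩
    exact hFb Δ hΔ
  have hbddG : BddAbove (Set.range fun u : {u : ℝ // 0 ≤ u} => G (u : ℝ)) := by
    refine ⟨C + C, ?_⟩
    rintro _ ⟨⟨u, hu⟩, rfl⟩
    exact hGb u hu
  have hbddA : BddAbove (Set.range fun r : {r : ℝ // 0 ≤ r ∧ r ≤ t} => F (r : ℝ)) := by
    refine ⟨C + C, ?_⟩
    rintro _ ⟨⟨r, hr⟩, rfl⟩
    exact hFb r hr.1
  have hne : Nonempty {Δ : ℝ // 0 ≤ Δ} := ⟨⟨0, le_rfl⟩⟩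
  have hneA : Nonempty {r : ℝ // 0 ≤ r ∧ r ≤ t} := ⟨⟨0, le_rfl, ht⟩⟩
  have hsplit : ∀ u : ℝ, F (t + u) =
      (∫ s in (0:ℝ)..t, lam * Real.exp (-lam * s) * h (x s)) +
        Real.exp (-lam * t) * G u := fun u => dp_split x hx h hh lam t u
  have hE : (0:ℝ) < Real.exp (-lam * t) := Real.exp_pos _
  -- show the two expressions in the goal equal sups over subtypes of F
  have goalA : (⨆ r : {r : ℝ // 0 ≤ r ∧ r ≤ t},
      ((∫ s in (0:ℝ)..(r : ℝ), lam * Real.exp (-lam * s) * h (x s)) +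
        Real.exp (-lam * (r : ℝ)) * h (x (r : ℝ))))
      = ⨆ r : {r : ℝ // 0 ≤ r ∧ r ≤ t}, F (r : ℝ) := rfl
  rw [hV0, goalA, hVt]
  apply le_antisymm
  · apply ciSup_le
    rintro ⟨Δ, hΔ⟩
    by_cases hc : Δ ≤ t
    · exact le_max_of_le_left (le_ciSup hbddA ⟨Δ, hΔ, hc⟩)
    · push_neg at hc
      apply le_max_of_le_right
      have hu : 0 ≤ Δ - t := by linarith
      have : F Δ = (∫ s in (0:ℝ)..t, lam * Real.exp (-lam * s) * h (x s)) +
          Real.exp (-lam * t) * G (Δ - t) := by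
        have := hsplit (Δ - t)
        simpa [add_sub_cancel] using this
      rw [this]
      apply add_le_add_right
      apply mul_le_mul_of_nonneg_left _ hE.le
      exact le_ciSup hbddG ⟨Δ - t, hu⟩
  · apply max_le
    · apply ciSup_le
      rintro ⟨r, hr0, hrt⟩
      exact le_ciSup hbddF ⟨r, hr0⟩
    · rw [← le_sub_iff_add_le', mul_comm, ← le_div_iff₀ hE]
      apply ciSup_le
      rintro ⟨u, hu⟩
      rw [le_div_iff₀ hE]
      have key : F (t + u) ≤ ⨆ Δ : {Δ : ℝ // 0 ≤ Δ}, F (Δ : ℝ) :=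
        le_ciSup hbddF ⟨t + u, by linarith⟩
      rw [hsplit u] at key
      linarith [key]
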